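/- Let K be an algebraically closed field, A a finite dimensional K-algebra, V a nonzero finite dimensional K-vector space, and Z an irreducible subset (in the Zariski topology) of the set of A-module structures on V. If 𝒯 is a bicompact torsion class in mod A, then at least one of the sets {ρ ∈ Z : V_ρ ∈ 𝒯} and {ρ ∈ Z : V_ρ ∈ 𝒯^⊥} is empty. -/

import Mathlib

namespace TorsPaper

variable (A : Type) [Ring A]

/-- `N` is (isomorphic to) a factor module of `M`. -/
def IsQuotientOf (N M : ModuleCat.{0} A) : Prop :=
  ∃ f : M →ₗ[A] N, Function.Surjective f

/-- `L` is (isomorphic to) a submodule of `M`. -/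
def IsSubmoduleOf (L M : ModuleCat.{0} A) : Prop :=
  ∃ f : L →ₗ[A] M, Function.Injective f

/-- `M` is a nonzero module. -/
def Nonzero (M : ModuleCat.{0} A) : Prop := ∃ x : M, x ≠ 0

/-- A torsion class in `mod A`: a class of finitely generated modules, containing the zero
modules, closed under isomorphisms (which follows from `quot`), factor modules and
extensions. -/
structure IsTorsionClass (T : ModuleCat.{0} A → Prop) : Prop where
  fin : ∀ M, T M → Module.Finite A M
  zero : ∀ M : ModuleCat.{0} A, (∀ x : M, x = 0) → T M
  quot : ∀ M N : ModuleCat.{0} A, T M → Module.Finite A N → IsQuotientOf A N M → T N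
  ext : ∀ M : ModuleCat.{0} A, Module.Finite A M → ∀ N : Submodule A M,
    T (ModuleCat.of A N) → T (ModuleCat.of A (M ⧸ N)) → T M

/-- A torsion-free class in `mod A`. -/
structure IsTorsionFreeClass (F : ModuleCat.{0} A → Prop) : Prop where
  fin : ∀ M, F M → Module.Finite A M
  zero : ∀ M : ModuleCat.{0} A, (∀ x : M, x = 0) → F M
  sub : ∀ M N : ModuleCat.{0} A, F M → Module.Finite A N → IsSubmoduleOf A N M → F N
  ext : ∀ M : ModuleCat.{0} A, Module.Finite A M → ∀ N : Submodule A M,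
    F (ModuleCat.of A N) → F (ModuleCat.of A (M ⧸ N)) → F M

/-- The right Hom-perpendicular class `T^⊥` inside `mod A`. -/
def rightPerp (T : ModuleCat.{0} A → Prop) : ModuleCat.{0} A → Prop :=
  fun X => Module.Finite A X ∧ ∀ M : ModuleCat.{0} A, T M → ∀ f : M →ₗ[A] X, f = 0

/-- The smallest torsion class containing a class `S` of modules. -/
def torsClosure (S : ModuleCat.{0} A → Prop) : ModuleCat.{0} A → Prop :=
  fun X => ∀ T : ModuleCat.{0} A → Prop, IsTorsionClass A T → (∀ Y, S Y → T Y) → T X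

/-- The smallest torsion-free class containing a class `S` of modules. -/
def torfClosure (S : ModuleCat.{0} A → Prop) : ModuleCat.{0} A → Prop :=
  fun X => ∀ F : ModuleCat.{0} A → Prop, IsTorsionFreeClass A F → (∀ Y, S Y → F Y) → F X

/-- A torsion class is compact if it is the smallest torsion class containing a single
module `M`. -/
def IsCompactTors (T : ModuleCat.{0} A → Prop) : Prop :=
  ∃ M : ModuleCat.{0} A, Module.Finite A M ∧ T = torsClosure A (fun X => X = M)

/-- A torsion class is cocompact if `T^⊥` is the smallest torsion-free class containing a
single module `N`. -/
def IsCocompactTors (T : ModuleCat.{0} A → Prop) : Prop :=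
  ∃ N : ModuleCat.{0} A, Module.Finite A N ∧ rightPerp A T = torfClosure A (fun X => X = N)

/-- A torsion class is bicompact if it is both compact and cocompact. -/
def IsBicompactTors (T : ModuleCat.{0} A → Prop) : Prop :=
  IsCompactTors A T ∧ IsCocompactTors A T

/-- A class `C` of modules is functorially finite in `mod A` if every finitely generated
module has a left `C`-approximation and a right `C`-approximation. -/
def FunctoriallyFinite (C : ModuleCat.{0} A → Prop) : Prop :=
  (∀ M : ModuleCat.{0} A, Module.Finite A M →
    ∃ (X : ModuleCat.{0} A) (f : M →ₗ[A] X), C X ∧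
      ∀ Y : ModuleCat.{0} A, C Y → ∀ g : M →ₗ[A] Y, ∃ h : X →ₗ[A] Y, h.comp f = g) ∧
  (∀ M : ModuleCat.{0} A, Module.Finite A M →
    ∃ (X : ModuleCat.{0} A) (f : X →ₗ[A] M), C X ∧
      ∀ Y : ModuleCat.{0} A, C Y → ∀ g : Y →ₗ[A] M, ∃ h : Y →ₗ[A] X, f.comp h = g)

/-- A stability function: a real-valued function on `mod A` which is additive on short
exact sequences. -/
def IsStability (θ : ModuleCat.{0} A → ℝ) : Prop :=
  ∀ L M N : ModuleCat.{0} A, Module.Finite A L → Module.Finite A M → Module.Finite A N →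
    ∀ (f : L →ₗ[A] M) (g : M →ₗ[A] N), Function.Injective f → Function.Surjective g →
      LinearMap.range f = LinearMap.ker g → θ M = θ L + θ N

/-- The semistable torsion class `T_θ`. -/
def tTheta (θ : ModuleCat.{0} A → ℝ) : ModuleCat.{0} A → Prop :=
  fun M => Module.Finite A M ∧ ∀ N : ModuleCat.{0} A, Module.Finite A N →
    IsQuotientOf A N M → Nonzero A N → 0 < θ N

/-- The semistable torsion class `\bar T_θ`. -/
def tThetaBar (θ : ModuleCat.{0} A → ℝ) : ModuleCat.{0} A → Prop :=
  fun M => Module.Finite A M ∧ ∀ N : ModuleCat.{0} A, Module.Finite A N →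
    IsQuotientOf A N M → 0 ≤ θ N

/-- The semistable torsion-free class `F_θ`. -/
def fTheta (θ : ModuleCat.{0} A → ℝ) : ModuleCat.{0} A → Prop :=
  fun M => Module.Finite A M ∧ ∀ L : ModuleCat.{0} A, Module.Finite A L →
    IsSubmoduleOf A L M → Nonzero A L → θ L < 0

/-- The semistable torsion-free class `\bar F_θ`. -/
def fThetaBar (θ : ModuleCat.{0} A → ℝ) : ModuleCat.{0} A → Prop :=
  fun M => Module.Finite A M ∧ ∀ L : ModuleCat.{0} A, Module.Finite A L →
    IsSubmoduleOf A L M → θ L ≤ 0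

/-- An integer-valued function on `mod A` additive on short exact sequences; these are
exactly the group homomorphisms `K0(mod A) → ℤ`. -/
def IsAdditiveZ (φ : ModuleCat.{0} A → ℤ) : Prop :=
  ∀ L M N : ModuleCat.{0} A, Module.Finite A L → Module.Finite A M → Module.Finite A N →
    ∀ (f : L →ₗ[A] M) (g : M →ₗ[A] N), Function.Injective f → Function.Surjective g →
      LinearMap.range f = LinearMap.ker g → φ M = φ L + φ N

/-- `[X] = [Y]` in the Grothendieck group `K0(mod A)`: since `K0(mod A)` is free abelian
on the simple modules, this holds iff all additive `ℤ`-valued functions agree on `X`, `Y`. -/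
def SameK0Class (X Y : ModuleCat.{0} A) : Prop :=
  ∀ φ : ModuleCat.{0} A → ℤ, IsAdditiveZ A φ → φ X = φ Y

/-- Two classes of modules are numerically disjoint if they contain no nonzero `X`, `Y`
with `[X] = [Y] ≠ 0` in `K0(mod A)`. -/
def NumericallyDisjoint (C D : ModuleCat.{0} A → Prop) : Prop :=
  ¬ ∃ X Y : ModuleCat.{0} A, C X ∧ D Y ∧ Nonzero A X ∧ Nonzero A Y ∧ SameK0Class A X Y

/-- A brick: a finitely generated module whose endomorphism algebra is a division algebra,
i.e. `M` is nonzero and every nonzero endomorphism is invertible. -/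
def IsBrick (M : ModuleCat.{0} A) : Prop :=
  Module.Finite A M ∧ Nonzero A M ∧ ∀ f : M →ₗ[A] M, f ≠ 0 → Function.Bijective f

/-- A semibrick: a set of pairwise Hom-orthogonal bricks. -/
def IsSemibrick (S : Set (ModuleCat.{0} A)) : Prop :=
  (∀ M ∈ S, IsBrick A M) ∧
    ∀ M ∈ S, ∀ N ∈ S, M ≠ N → ∀ f : M →ₗ[A] N, f = 0

end TorsPaper

namespace TorsPaper


variable (K : Type) [Field K]

/-- The polynomial functions on a `K`-vector space `W`: the `K`-subalgebra of `W → K`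
generated by the linear forms. -/
def polyFuns (W : Type) [AddCommGroup W] [Module K W] : Subalgebra K (W → K) :=
  Algebra.adjoin K (Set.range fun l : W →ₗ[K] K => (l : W → K))

/-- The Zariski topology on a `K`-vector space `W`: closed sets are the common zero loci
of sets of polynomial functions. -/
def zariskiTop (W : Type) [AddCommGroup W] [Module K W] : TopologicalSpace W :=
  TopologicalSpace.generateFrom { U | ∃ f ∈ polyFuns K W, U = {x | f x ≠ 0} }

variable (A : Type) [Ring A] [Algebra K A]
variable (V : Type) [AddCommGroup V] [Module K V]

/-- The set of `A`-module structures on the `K`-vector space `V`, i.e. the `K`-algebra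
homomorphisms `A → End_K(V)`, as a subset of the affine space `Hom_K(A, End_K(V))`. -/
def RepSpace : Type :=
  { ρ : A →ₗ[K] (V →ₗ[K] V) // ρ 1 = LinearMap.id ∧
      ∀ a b : A, ρ (a * b) = (ρ a).comp (ρ b) }

/-- The (subspace) Zariski topology on the set of `A`-module structures on `V`. -/
def repTop : TopologicalSpace (RepSpace K A V) :=
  TopologicalSpace.induced Subtype.val (zariskiTop K (A →ₗ[K] (V →ₗ[K] V)))


/-- The module `V_ρ` determined by a module structure `ρ` on `V` belongs to the class
`C` (which is assumed closed under isomorphisms). -/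
def memRep (ρ : RepSpace K A V) (C : ModuleCat.{0} A → Prop) : Prop :=
  ∃ X : ModuleCat.{0} A, C X ∧ ∃ e : V ≃+ X, ∀ (a : A) (v : V), e (ρ.1 a v) = a • e v


section Aux

lemma mem_polyFuns_affine {W P : Type} [AddCommGroup W] [Module K W]
    [AddCommGroup P] [Module K P] (L : W →ₗ[K] P) (C : P) (φ : P →ₗ[K] K) :
    (fun w => φ (L w + C)) ∈ polyFuns K W := by
  have h : (fun w => φ (L w + C)) = ⇑(φ.comp L) + (fun _ => φ C) := by
    funext w; simp [map_add]
  have hconst : (fun _ : W => φ C) ∈ polyFuns K W := by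
    have hmem := Subalgebra.algebraMap_mem (polyFuns K W) (φ C)
    have heq : (algebraMap K (W → K)) (φ C) = fun _ : W => φ C := rfl
    rwa [heq] at hmem
  rw [h]
  exact add_mem (Algebra.subset_adjoin ⟨φ.comp L, rfl⟩) hconst

lemma isOpen_injective_set {W E F : Type} [AddCommGroup W] [Module K W]
    [AddCommGroup E] [Module K E] [FiniteDimensional K E]
    [AddCommGroup F] [Module K F]
    (Φ : W → (E →ₗ[K] F))
    (hΦ : ∀ φ : (E →ₗ[K] F) →ₗ[K] K, (fun w => φ (Φ w)) ∈ polyFuns K W) :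
    @IsOpen W (zariskiTop K W) {w | Function.Injective (Φ w)} := by
  classical
  letI : TopologicalSpace W := zariskiTop K W
  set b := Module.finBasis K E with hb
  have key : {w | Function.Injective (Φ w)} =
      ⋃ g : F →ₗ[K] E, {w | (LinearMap.toMatrix b b (g.comp (Φ w))).det ≠ 0} := by
    ext w
    simp only [Set.mem_setOf_eq, Set.mem_iUnion]
    constructor
    · intro h
      obtain ⟨g, hg⟩ := (Φ w).exists_leftInverse_of_injective (LinearMap.ker_eq_bot.mpr h)
      refine ⟨g, ?_⟩
      rw [hg]
      simp [LinearMap.toMatrix_id]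
    · rintro ⟨g, hg⟩
      have h2 : IsUnit (LinearMap.toMatrix b b (g.comp (Φ w))).det := isUnit_iff_ne_zero.mpr hg
      have h3 : Function.Injective (g.comp (Φ w)) := by
        have h4 := (LinearEquiv.ofIsUnitDet h2).injective
        intro x y hxy
        exact h4 (by rw [LinearEquiv.ofIsUnitDet_apply, LinearEquiv.ofIsUnitDet_apply]; exact hxy)
      intro x y hxy
      exact h3 (by simp [LinearMap.comp_apply, hxy])
  rw [key]
  refine isOpen_iUnion fun g => ?_
  have hmem : ∀ i j, (fun w => LinearMap.toMatrix b b (g.comp (Φ w)) i j) ∈ polyFuns K W := by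
    intro i j
    have heq : (fun w => LinearMap.toMatrix b b (g.comp (Φ w)) i j)
        = fun w => (((b.coord i).comp g).comp (LinearMap.applyₗ (b j))) (Φ w) := by
      funext w
      simp [LinearMap.toMatrix_apply, Module.Basis.coord_apply, LinearMap.applyₗ]
      rfl
    rw [heq]
    exact hΦ _
  set Mat : Matrix (Fin (Module.finrank K E)) (Fin (Module.finrank K E)) (polyFuns K W) :=
    fun i j => ⟨_, hmem i j⟩ with hMat
  have hdet : ∀ w, ((Mat.det : polyFuns K W) : W → K) w
      = (LinearMap.toMatrix b b (g.comp (Φ w))).det := by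
    intro w
    have h1 : ((Pi.evalRingHom (fun _ : W => K) w).comp
        (polyFuns K W).val.toRingHom) Mat.det
        = (Mat.map ((Pi.evalRingHom (fun _ : W => K) w).comp
            (polyFuns K W).val.toRingHom)).det := RingHom.map_det _ _
    have h2 : (Mat.map ((Pi.evalRingHom (fun _ : W => K) w).comp
        (polyFuns K W).val.toRingHom)) = LinearMap.toMatrix b b (g.comp (Φ w)) := by
      ext i j
      simp [hMat, Matrix.map_apply]
      rfl
    rw [← h2]
    exact h1
  have hset : {w | (LinearMap.toMatrix b b (g.comp (Φ w))).det ≠ 0}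
      = {x | ((Mat.det : polyFuns K W) : W → K) x ≠ 0} := by
    ext w
    simp [hdet w]
  rw [hset]
  exact TopologicalSpace.isOpen_generateFrom_of_mem
    ⟨((Mat.det : polyFuns K W) : W → K), (Mat.det : polyFuns K W).2, rfl⟩

end Aux

section Phi

variable {K A V}
variable (N : Type) [AddCommGroup N] [Module K N]

/-- `w ↦ (f ↦ (a, v) ↦ f (w a v))`. -/
def LHom1 : (A →ₗ[K] (V →ₗ[K] V)) →ₗ[K] ((V →ₗ[K] N) →ₗ[K] (A → V → N)) where
  toFun w :=
    { toFun := fun f a v => f (w a v)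
      map_add' := fun f g => by funext a v; simp
      map_smul' := fun k f => by funext a v; simp }
  map_add' w w' := by
    refine LinearMap.ext fun f => ?_
    funext a v
    simp
  map_smul' k w := by
    refine LinearMap.ext fun f => ?_
    funext a v
    simp

/-- `f ↦ (a, v) ↦ a • f v`. -/
def CHom1 [Module A N] [SMulCommClass A K N] :
    (V →ₗ[K] N) →ₗ[K] (A → V → N) where
  toFun f := fun a v => a • f v
  map_add' f g := by funext a v; simp
  map_smul' k f := by funext a v; simp [smul_comm]

/-- The linear map whose kernel is `Hom_A(V_w, N)`. -/
def Phi1 [Module A N] [SMulCommClass A K N] (w : A →ₗ[K] (V →ₗ[K] V)) :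
    (V →ₗ[K] N) →ₗ[K] (A → V → N) :=
  LHom1 N w - CHom1 N

lemma Phi1_apply [Module A N] [SMulCommClass A K N] (w : A →ₗ[K] (V →ₗ[K] V))
    (f : V →ₗ[K] N) (a : A) (v : V) :
    Phi1 N w f a v = f (w a v) - a • f v := rfl

lemma Phi1_poly [Module A N] [SMulCommClass A K N]
    (φ : ((V →ₗ[K] N) →ₗ[K] (A → V → N)) →ₗ[K] K) :
    (fun w => φ (Phi1 N w)) ∈ polyFuns K (A →ₗ[K] (V →ₗ[K] V)) := by
  have h : (fun w => φ (Phi1 N w)) = fun w => φ (LHom1 N w + -(CHom1 N)) := by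
    funext w
    show φ (LHom1 N w - CHom1 N) = _
    rw [sub_eq_add_neg]
  rw [h]
  exact mem_polyFuns_affine K (LHom1 N) (-(CHom1 N)) φ

variable (M : Type) [AddCommGroup M] [Module K M]

/-- `w ↦ (f ↦ (a, m) ↦ w a (f m))`. -/
def LHom2 : (A →ₗ[K] (V →ₗ[K] V)) →ₗ[K] ((M →ₗ[K] V) →ₗ[K] (A → M → V)) where
  toFun w :=
    { toFun := fun f a m => w a (f m)
      map_add' := fun f g => by funext a m; simp
      map_smul' := fun k f => by funext a m; simp }
  map_add' w w' := by
    refine LinearMap.ext fun f => ?_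
    funext a m
    simp
  map_smul' k w := by
    refine LinearMap.ext fun f => ?_
    funext a m
    simp

/-- `f ↦ (a, m) ↦ f (a • m)`. -/
def CHom2 [Module A M] : (M →ₗ[K] V) →ₗ[K] (A → M → V) where
  toFun f := fun a m => f (a • m)
  map_add' f g := by funext a m; simp
  map_smul' k f := by funext a m; simp

/-- The linear map whose kernel is `Hom_A(M, V_w)`. -/
def Phi2 [Module A M] (w : A →ₗ[K] (V →ₗ[K] V)) :
    (M →ₗ[K] V) →ₗ[K] (A → M → V) :=
  CHom2 M - LHom2 M w

lemma Phi2_apply [Module A M] (w : A →ₗ[K] (V →ₗ[K] V))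
    (f : M →ₗ[K] V) (a : A) (m : M) :
    Phi2 M w f a m = f (a • m) - w a (f m) := rfl

lemma Phi2_poly [Module A M]
    (φ : ((M →ₗ[K] V) →ₗ[K] (A → M → V)) →ₗ[K] K) :
    (fun w => φ (Phi2 M w)) ∈ polyFuns K (A →ₗ[K] (V →ₗ[K] V)) := by
  have h : (fun w => φ (Phi2 M w)) = fun w => φ ((-(LHom2 M)) w + CHom2 M) := by
    funext w
    show φ (CHom2 M - LHom2 M w) = _
    rw [LinearMap.neg_apply, ← sub_eq_neg_add]
  rw [h]
  exact mem_polyFuns_affine K (-(LHom2 M)) (CHom2 M) φ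

end Phi

section RepMod

variable {K A V}

/-- The `A`-module structure on `V` determined by `ρ`. -/
def repMod (ρ : RepSpace K A V) : Module A V where
  smul a v := ρ.1 a v
  one_smul v := by show ρ.1 1 v = v; rw [ρ.2.1]; rfl
  mul_smul a b v := by show ρ.1 (a * b) v = ρ.1 a (ρ.1 b v); rw [ρ.2.2]; rfl
  smul_zero a := (ρ.1 a).map_zero
  smul_add a v w := (ρ.1 a).map_add v w
  add_smul a b v := by show ρ.1 (a + b) v = ρ.1 a v + ρ.1 b v; rw [map_add]; rfl
  zero_smul v := by show ρ.1 0 v = 0; rw [map_zero]; rfl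

/-- The module `V_ρ` as an object of `ModuleCat A`. -/
def VMod (ρ : RepSpace K A V) : ModuleCat.{0} A :=
  @ModuleCat.of A _ V _ (repMod ρ)

lemma repMod_algebraMap_smul (ρ : RepSpace K A V) (k : K) (v : V) :
    ρ.1 (algebraMap K A k) v = k • v := by
  rw [Algebra.algebraMap_eq_smul_one, map_smul, ρ.2.1]
  rfl

lemma vMod_finite [FiniteDimensional K V] (ρ : RepSpace K A V) :
    Module.Finite A (VMod ρ) := by
  letI : Module A V := repMod ρ
  obtain ⟨s, hs⟩ := Module.finite_def.mp (inferInstance : Module.Finite K V)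
  have key : ∀ x : V, x ∈ Submodule.span A (s : Set V) := by
    intro x
    have hx : x ∈ Submodule.span K (s : Set V) := by rw [hs]; trivial
    refine Submodule.span_induction (fun y hy => Submodule.subset_span hy)
      (Submodule.zero_mem _) (fun y z _ _ hy hz => Submodule.add_mem _ hy hz) ?_ hx
    intro k y _ hy
    have hky : (k • y : V) = ρ.1 (algebraMap K A k) y :=
      (repMod_algebraMap_smul ρ k y).symm
    have h2 : ρ.1 (algebraMap K A k) y = (algebraMap K A k) • y := rfl
    rw [hky, h2]
    exact Submodule.smul_mem _ (algebraMap K A k) hy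
  exact Module.finite_def.mpr ⟨s, eq_top_iff.mpr fun x _ => key x⟩

end RepMod

section TorsFree

variable {A}

lemma finite_of_trivial (M' : ModuleCat.{0} A) (h : ∀ x : M', x = 0) :
    Module.Finite A M' := by
  refine ⟨⟨∅, ?_⟩⟩
  rw [eq_top_iff]
  intro x _
  rw [h x]
  exact Submodule.zero_mem _

lemma isTorsionClass_homPerp (X0 : ModuleCat.{0} A) :
    IsTorsionClass A (fun M' => Module.Finite A M' ∧ ∀ f : M' →ₗ[A] X0, f = 0) where
  fin _ h := h.1
  zero M' h := by
    refine ⟨finite_of_trivial M' h, fun f => ?_⟩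
    refine LinearMap.ext fun x => ?_
    rw [h x, map_zero]
    rfl
  quot M' N' hM' hfin hq := by
    obtain ⟨π, hπ⟩ := hq
    refine ⟨hfin, fun f => ?_⟩
    have h0 : f.comp π = 0 := hM'.2 _
    refine LinearMap.ext fun n => ?_
    obtain ⟨m, rfl⟩ := hπ n
    simpa using LinearMap.congr_fun h0 m
  ext M' hfin Nsub hN hQ := by
    refine ⟨hfin, fun f => ?_⟩
    have h1 : ∀ x ∈ Nsub, f x = 0 := by
      intro x hx
      have h0 : f.comp Nsub.subtype = 0 := hN.2 (f.comp Nsub.subtype)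
      simpa using LinearMap.congr_fun h0 ⟨x, hx⟩
    have h2 : Nsub ≤ LinearMap.ker f := fun x hx => LinearMap.mem_ker.mpr (h1 x hx)
    have h3 : Nsub.liftQ f h2 = 0 := hQ.2 (Nsub.liftQ f h2)
    refine LinearMap.ext fun x => ?_
    have h4 : f x = (Nsub.liftQ f h2) (Nsub.mkQ x) := by
      rw [Submodule.mkQ_apply, Submodule.liftQ_apply]
    rw [h4, h3]
    rfl

lemma isTorsionFreeClass_homPerp (X0 : ModuleCat.{0} A) :
    IsTorsionFreeClass A (fun Y => Module.Finite A Y ∧ ∀ f : X0 →ₗ[A] Y, f = 0) where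
  fin _ h := h.1
  zero Y h := by
    refine ⟨finite_of_trivial Y h, fun f => ?_⟩
    exact LinearMap.ext fun x => h _
  sub Y Y' hY hfin hsub := by
    obtain ⟨ι, hι⟩ := hsub
    refine ⟨hfin, fun f => ?_⟩
    have h0 : ι.comp f = 0 := hY.2 _
    refine LinearMap.ext fun x => hι ?_
    show ι (f x) = ι 0
    rw [map_zero]
    simpa using LinearMap.congr_fun h0 x
  ext Y hfin Nsub hN hQ := by
    refine ⟨hfin, fun f => ?_⟩
    have h1 : Nsub.mkQ.comp f = 0 := hQ.2 (Nsub.mkQ.comp f)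
    have h2 : ∀ x, f x ∈ Nsub := by
      intro x
      have h3 := LinearMap.congr_fun h1 x
      simpa [Submodule.Quotient.mk_eq_zero] using h3
    have h3 : f.codRestrict Nsub h2 = 0 := hN.2 (f.codRestrict Nsub h2)
    refine LinearMap.ext fun x => ?_
    have h4 := LinearMap.congr_fun h3 x
    simpa using congrArg Subtype.val h4

end TorsFree

set_option maxHeartbeats 1000000 in
/-- Let `Z` be an irreducible subset of the space of `A`-module
structures on a nonzero finite dimensional vector space `V`. If `𝒯` is a bicompact
torsion class, then `{ρ ∈ Z : V_ρ ∈ 𝒯}` or `{ρ ∈ Z : V_ρ ∈ 𝒯^⊥}` is empty. -/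
theorem stmt12 [IsAlgClosed K] [FiniteDimensional K A] [FiniteDimensional K V]
    (hV : ∃ v : V, v ≠ 0)
    (T : ModuleCat.{0} A → Prop) (hT : IsTorsionClass A T)
    (hbc : IsBicompactTors A T)
    (Z : Set (RepSpace K A V)) (hZ : @IsIrreducible _ (repTop K A V) Z) :
    {ρ ∈ Z | memRep K A V ρ T} = ∅ ∨
      {ρ ∈ Z | memRep K A V ρ (rightPerp A T)} = ∅ := by
  classical
  by_contra hcon
  push_neg at hcon
  obtain ⟨h1ne, h2ne⟩ := hcon
  obtain ⟨ρ1, hρ1⟩ := h1ne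
  obtain ⟨ρ2, hρ2⟩ := h2ne
  obtain ⟨⟨Mg, hMgfin, hTeq⟩, ⟨Ng, hNgfin, hFeq⟩⟩ := hbc
  haveI hMgfin' : Module.Finite A ↥Mg := hMgfin
  haveI hNgfin' : Module.Finite A ↥Ng := hNgfin
  letI instKN : Module K ↥Ng := Module.compHom ↥Ng (algebraMap K A)
  letI instKM : Module K ↥Mg := Module.compHom ↥Mg (algebraMap K A)
  haveI hscN : SMulCommClass A K ↥Ng := ⟨fun a k n => by
    show a • ((algebraMap K A k) • n) = (algebraMap K A k) • (a • n)
    rw [← mul_smul, ← mul_smul, Algebra.commutes]⟩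
  haveI htowN : IsScalarTower K A ↥Ng := ⟨fun k a n => by
    show (k • a) • n = (algebraMap K A k) • (a • n)
    rw [Algebra.smul_def, mul_smul]⟩
  haveI htowM : IsScalarTower K A ↥Mg := ⟨fun k a m => by
    show (k • a) • m = (algebraMap K A k) • (a • m)
    rw [Algebra.smul_def, mul_smul]⟩
  haveI hfinKN : Module.Finite K ↥Ng := Module.Finite.trans A ↥Ng
  haveI hfinKM : Module.Finite K ↥Mg := Module.Finite.trans A ↥Mg
  -- the generators belong to the respective classes
  have hMT : T Mg := by
    rw [hTeq]
    exact fun T'' _ h2 => h2 _ rfl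
  have hNperp : rightPerp A T Ng := by
    rw [hFeq]
    exact fun F _ h2 => h2 _ rfl
  -- topology
  letI tW : TopologicalSpace (A →ₗ[K] (V →ₗ[K] V)) := zariskiTop K (A →ₗ[K] (V →ₗ[K] V))
  letI tR : TopologicalSpace (RepSpace K A V) := repTop K A V
  have hcont : Continuous (Subtype.val : RepSpace K A V → (A →ₗ[K] (V →ₗ[K] V))) :=
    continuous_induced_dom
  have hopen1 : @IsOpen _ (zariskiTop K (A →ₗ[K] (V →ₗ[K] V)))
      {w | Function.Injective (Phi1 (↥Ng) w)} :=
    isOpen_injective_set (E := V →ₗ[K] ↥Ng) (F := A → V → ↥Ng) K (Phi1 (↥Ng))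
      (fun φ => Phi1_poly (↥Ng) φ)
  have hopen2 : @IsOpen _ (zariskiTop K (A →ₗ[K] (V →ₗ[K] V)))
      {w | Function.Injective (Phi2 (↥Mg) w)} :=
    isOpen_injective_set (E := ↥Mg →ₗ[K] V) (F := A → ↥Mg → V) K (Phi2 (↥Mg))
      (fun φ => Phi2_poly (↥Mg) φ)
  have hO1 : IsOpen (Subtype.val ⁻¹' {w | Function.Injective (Phi1 (↥Ng) w)} :
      Set (RepSpace K A V)) := hopen1.preimage hcont
  have hO2 : IsOpen (Subtype.val ⁻¹' {w | Function.Injective (Phi2 (↥Mg) w)} :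
      Set (RepSpace K A V)) := hopen2.preimage hcont
  -- claim 1 : a module structure in 𝒯 gives a point of the first open set
  have hclaim1 : ∀ ρ : RepSpace K A V, memRep K A V ρ T →
      Function.Injective (Phi1 (↥Ng) ρ.1) := by
    intro ρ hm
    obtain ⟨X, hXT, e, he⟩ := hm
    refine LinearMap.ker_eq_bot.mp ((Submodule.eq_bot_iff _).mpr fun f hf => ?_)
    have h0 : (Phi1 (↥Ng) ρ.1) f = 0 := LinearMap.mem_ker.mp hf
    have hker : ∀ (a : A) (v : V), f (ρ.1 a v) = a • f v := by
      intro a v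
      have h2 := congrFun (congrFun h0 a) v
      have h1 : f (ρ.1 a v) - a • f v = 0 := by simpa [Phi1_apply] using h2
      exact sub_eq_zero.mp h1
    have hesymm : ∀ (a : A) (x : X), e.symm (a • x) = ρ.1 a (e.symm x) := by
      intro a x
      apply e.injective
      rw [AddEquiv.apply_symm_apply, he, AddEquiv.apply_symm_apply]
    let g : X →ₗ[A] Ng :=
      { toFun := fun x => f (e.symm x)
        map_add' := fun x y => by
          show f (e.symm (x + y)) = f (e.symm x) + f (e.symm y)
          rw [map_add, map_add]
        map_smul' := fun a x => by
          show f (e.symm (a • x)) = a • f (e.symm x)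
          rw [hesymm, hker] }
    have hg : g = 0 := hNperp.2 X hXT g
    refine LinearMap.ext fun v => ?_
    show f v = 0
    calc f v = f (e.symm (e v)) := by rw [AddEquiv.symm_apply_apply]
    _ = 0 := by
        have hgv : g (e v) = 0 := by rw [hg]; rfl
        exact hgv
  -- claim 2 : a module structure in 𝒯^⊥ gives a point of the second open set
  have hclaim2 : ∀ ρ : RepSpace K A V, memRep K A V ρ (rightPerp A T) →
      Function.Injective (Phi2 (↥Mg) ρ.1) := by
    intro ρ hm
    obtain ⟨X, hXperp, e, he⟩ := hm
    refine LinearMap.ker_eq_bot.mp ((Submodule.eq_bot_iff _).mpr fun f hf => ?_)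
    have h0 : (Phi2 (↥Mg) ρ.1) f = 0 := LinearMap.mem_ker.mp hf
    have hker : ∀ (a : A) (m : ↥Mg), f (a • m) = ρ.1 a (f m) := by
      intro a m
      have h2 := congrFun (congrFun h0 a) m
      have h1 : f (a • m) - ρ.1 a (f m) = 0 := by simpa [Phi2_apply] using h2
      exact sub_eq_zero.mp h1
    let g : Mg →ₗ[A] X :=
      { toFun := fun m => e (f m)
        map_add' := fun x y => by
          show e (f (x + y)) = e (f x) + e (f y)
          rw [map_add, map_add]
        map_smul' := fun a m => by
          show e (f (a • m)) = a • e (f m)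
          rw [hker, he] }
    have hg : g = 0 := hXperp.2 Mg hMT g
    refine LinearMap.ext fun m => ?_
    show f m = 0
    have hgm : e (f m) = 0 := by
      have hx : g m = 0 := by rw [hg]; rfl
      exact hx
    apply e.injective
    rw [hgm, map_zero]
  -- irreducibility produces a common point
  obtain ⟨ρ0, hρ0Z, hinj1, hinj2⟩ :=
    hZ.2 _ _ hO1 hO2 ⟨ρ1, hρ1.1, hclaim1 ρ1 hρ1.2⟩ ⟨ρ2, hρ2.1, hclaim2 ρ2 hρ2.2⟩
  have hinj1 : Function.Injective (Phi1 (↥Ng) ρ0.1) := hinj1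
  have hinj2 : Function.Injective (Phi2 (↥Mg) ρ0.1) := hinj2
  -- the module V_{ρ0}
  set X0 : ModuleCat.{0} A := VMod ρ0 with hX0
  haveI hX0fin : Module.Finite A X0 := vMod_finite ρ0
  -- all A-linear maps X0 → Ng vanish
  have hvan1 : ∀ f : X0 →ₗ[A] Ng, f = 0 := by
    intro f
    let fK : V →ₗ[K] ↥Ng :=
      { toFun := fun v => f v
        map_add' := fun x y => f.map_add x y
        map_smul' := fun k v => by
          have h1 : (k • v : V) = ρ0.1 (algebraMap K A k) v :=
            (repMod_algebraMap_smul ρ0 k v).symm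
          show f (k • v) = k • f v
          rw [h1]
          exact f.map_smul (algebraMap K A k) v }
    have hker : (Phi1 (↥Ng) ρ0.1) fK = 0 := by
      funext a v
      show fK (ρ0.1 a v) - a • fK v = 0
      exact sub_eq_zero.mpr (f.map_smul a v)
    have h0 : fK = 0 := hinj1 (by rw [hker, map_zero])
    exact LinearMap.ext fun v => LinearMap.congr_fun h0 v
  -- all A-linear maps Mg → X0 vanish
  have hvan2 : ∀ f : Mg →ₗ[A] X0, f = 0 := by
    intro f
    let fK : ↥Mg →ₗ[K] V :=
      { toFun := fun m => f m
        map_add' := fun x y => f.map_add x y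
        map_smul' := fun k m => by
          have h2 : ρ0.1 (algebraMap K A k) (f m) = k • (show V from f m) :=
            repMod_algebraMap_smul ρ0 k (f m)
          exact (f.map_smul (algebraMap K A k) m).trans h2 }
    have hker : (Phi2 (↥Mg) ρ0.1) fK = 0 := by
      funext a m
      show fK (a • m) - ρ0.1 a (fK m) = 0
      exact sub_eq_zero.mpr (f.map_smul a m)
    have h0 : fK = 0 := hinj2 (by rw [hker, map_zero])
    exact LinearMap.ext fun m => LinearMap.congr_fun h0 m
  -- X0 belongs to 𝒯^⊥
  have hX0perpT : rightPerp A T X0 := by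
    refine ⟨hX0fin, fun M' hM' f => ?_⟩
    rw [hTeq] at hM'
    exact (hM' _ (isTorsionClass_homPerp X0)
      (fun Y hY => by rw [hY]; exact ⟨hMgfin', hvan2⟩)).2 f
  -- hence X0 belongs to the torsion-free closure of Ng, so Hom(X0, X0) = 0
  have hX0F : torfClosure A (fun X => X = Ng) X0 := by
    rw [← hFeq]
    exact hX0perpT
  have hfinal := hX0F _ (isTorsionFreeClass_homPerp X0)
    (fun Y hY => by rw [hY]; exact ⟨hNgfin', hvan1⟩)
  obtain ⟨v0, hv0⟩ := hV
  have hid : (LinearMap.id : X0 →ₗ[A] X0) = 0 := hfinal.2 LinearMap.id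
  have hzero : (v0 : V) = 0 := by
    have h := LinearMap.congr_fun hid v0
    exact h
  exact hv0 hzero

end TorsPaper
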